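/- Let G be a finite abelian 2-generated group that is not isomorphic to Cₙ × Cₙ for any n (i.e., its invariant factor decomposition is Cₘ × Cₙ with m properly dividing n, m < n, possibly m = 1 with G cyclic nontrivial). Then there exists a non-identity element g ∈ G lying in Σ(x,y) for every generating pair (x,y) of G. -/
import Mathlib


def ASigma {G : Type*} [AddCommGroup G] (x y : G) : Set G :=
  (AddSubgroup.zmultiples x : Set G) ∪ (AddSubgroup.zmultiples y : Set G) ∪
    (AddSubgroup.zmultiples (x + y) : Set G)

theorem stmt16 (m n : ℕ) (hm : 1 ≤ m) (hdvd : m ∣ n) (hlt : m < n) :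
    ∃ g : ZMod m × ZMod n, g ≠ 0 ∧
      ∀ x y : ZMod m × ZMod n,
        AddSubgroup.closure {x, y} = ⊤ → g ∈ ASigma x y := by
  haveI : NeZero n := ⟨by omega⟩
  obtain ⟨t, ht⟩ := hdvd
  have ht1 : 1 < t := by
    rcases Nat.lt_or_ge t 2 with h | h
    · interval_cases t <;> omega
    · omega
  set p := t.minFac with hpdef
  have hp : p.Prime := Nat.minFac_prime (by omega)
  obtain ⟨s, hs⟩ := t.minFac_dvd
  set k := m * s with hkdef
  have hn : n = p * k := by rw [ht, hs, hkdef]; ring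
  have hs1 : 1 ≤ s := by
    rcases Nat.eq_zero_or_pos s with rfl | h
    · omega
    · omega
  have hk1 : 1 ≤ k := by calc 1 = 1*1 := rfl
    _ ≤ m * s := Nat.mul_le_mul hm hs1
  have hkn : k < n := by
    have := hp.two_le
    nlinarith
  have hkcast : (k : ZMod n) ≠ 0 := by
    intro h
    rw [ZMod.natCast_eq_zero_iff] at h
    have := Nat.le_of_dvd (by omega) h
    omega
  set g : ZMod m × ZMod n := (0, (k : ZMod n)) with hgdef
  have hg0 : g ≠ 0 := by
    simp only [hgdef, Prod.ext_iff, ne_eq, Prod.fst_zero, Prod.snd_zero]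
    tauto
  have hpg : (p : ℤ) • g = 0 := by
    simp only [hgdef, Prod.smul_mk, smul_zero, Prod.mk_eq_zero, true_and]
    have : ((p : ℤ)) • ((k : ℕ) : ZMod n) = (((p * k : ℕ) : ZMod n)) := by
      push_cast
      rw [zsmul_eq_mul]
      push_cast
      ring
    rw [this, ← hn, ZMod.natCast_self]
  have key : ∀ z : ZMod m × ZMod n, (k : ℤ) • z ≠ 0 →
      g ∈ AddSubgroup.zmultiples z := by
    intro z hz
    have hzval : (k : ℤ) • z = ((z.2.val : ℤ)) • g := by
      have h1 : (k : ℤ) • z.1 = 0 := by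
        rw [zsmul_eq_mul]
        have : ((k : ℤ) : ZMod m) = 0 := by
          push_cast
          rw [ZMod.natCast_eq_zero_iff]
          exact ⟨s, rfl⟩
        rw [this, zero_mul]
      have h2 : (k : ℤ) • z.2 = ((z.2.val : ℤ)) • ((k : ℕ) : ZMod n) := by
        rw [zsmul_eq_mul, zsmul_eq_mul]
        push_cast
        rw [ZMod.natCast_val, ZMod.cast_id]
        ring
      simp only [hgdef, Prod.ext_iff, Prod.smul_fst, Prod.smul_snd, Prod.fst_zero,
        Prod.snd_zero, smul_zero]
      exact ⟨h1, h2⟩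
    have hpz : ¬ (p ∣ z.2.val) := by
      rintro ⟨c, hc⟩
      apply hz
      rw [hzval, hc]
      rw [show (((p * c : ℕ)) : ℤ) = (c : ℤ) * (p : ℤ) by push_cast; ring]
      rw [mul_smul, hpg, smul_zero]
    have hco : IsCoprime ((p : ℕ) : ℤ) ((z.2.val : ℕ) : ℤ) := by
      rw [Int.isCoprime_iff_gcd_eq_one, Int.gcd_natCast_natCast]
      exact (Nat.Prime.coprime_iff_not_dvd hp).mpr hpz
    obtain ⟨a, b, hab⟩ := hco
    have hgz : g = (b * (k : ℤ)) • z := by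
      calc g = (a * (p : ℤ) + b * ((z.2.val : ℕ) : ℤ)) • g := by rw [hab, one_smul]
        _ = (a * (p : ℤ)) • g + (b * ((z.2.val : ℕ) : ℤ)) • g := add_zsmul g _ _
        _ = b • (((z.2.val : ℕ) : ℤ) • g) := by
            rw [mul_smul, mul_smul, hpg, smul_zero, zero_add]
        _ = b • ((k : ℤ) • z) := by rw [hzval]
        _ = (b * (k : ℤ)) • z := (mul_smul _ _ _).symm
    exact AddSubgroup.mem_zmultiples_iff.mpr ⟨b * (k : ℤ), hgz.symm⟩
  refine ⟨g, hg0, ?_⟩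
  intro x y hxy
  simp only [ASigma, Set.mem_union, SetLike.mem_coe]
  by_cases hx : (k : ℤ) • x = 0
  · by_cases hy : (k : ℤ) • y = 0
    · exfalso
      have hmem : ((0, 1) : ZMod m × ZMod n) ∈ AddSubgroup.closure {x, y} := by
        rw [hxy]; trivial
      have hle : AddSubgroup.closure {x, y} ≤ (zsmulAddGroupHom (k : ℤ)).ker := by
        rw [AddSubgroup.closure_le]
        rintro w hw
        simp only [Set.mem_insert_iff, Set.mem_singleton_iff] at hw
        rcases hw with rfl | rfl
        · simpa [AddMonoidHom.mem_ker, zsmulAddGroupHom] using hx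
        · simpa [AddMonoidHom.mem_ker, zsmulAddGroupHom] using hy
      have h01 := hle hmem
      simp only [AddMonoidHom.mem_ker,
        zsmulAddGroupHom] at h01
      apply hkcast
      have := congrArg Prod.snd h01
      simpa [zsmul_eq_mul] using this
    · exact Or.inl (Or.inr (key y hy))
  · exact Or.inl (Or.inl (key x hx))
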